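/- Differentiable diagonalization of symmetric matrices: bijectivity of the differential at anisotropic points. Let n ≥ 1, let R be a real orthogonal n×n matrix (RᵀR = Id), let λ ∈ ℝⁿ and D = diag(λ). Consider the linear map T : V × ℝⁿ → Sym_n, where V = {X ∈ Mat_n(ℝ) : RᵀX + XᵀR = 0} is the tangent space to O(n) at R, defined by T(X, μ) = X D Rᵀ + R D Xᵀ + R diag(μ) Rᵀ (the differential at (R, λ) of the map (R, λ) ↦ R diag(λ) Rᵀ). Then T is bijective if and only if the entries λ_1, …, λ_n are pairwise distinct. Moreover the map O(n) × ℝⁿ → Sym_n, (R, λ) ↦ R diag(λ) Rᵀ, is surjective. -/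

import Mathlib

/-!
STATEMENT 8: Differentiable diagonalization of symmetric matrices:
the differential T(X, μ) = X D Rᵀ + R D Xᵀ + R diag(μ) Rᵀ of
(R, λ) ↦ R diag(λ) Rᵀ at an orthogonal R, restricted to the tangent space
V = {X : Rᵀ X + Xᵀ R = 0} of O(n) at R times ℝⁿ, is a bijection onto the
symmetric matrices iff the entries of λ are pairwise distinct; moreover
(R, λ) ↦ R diag(λ) Rᵀ is onto the symmetric matrices (spectral theorem).
-/

open Matrix

noncomputable section

theorem diagonalization_differential_bijective_iff_anisotropic
    (n : ℕ) (hn : 1 ≤ n)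
    (R : Matrix (Fin n) (Fin n) ℝ) (hR : Rᵀ * R = 1)
    (lam : Fin n → ℝ)
    (T : Matrix (Fin n) (Fin n) ℝ → (Fin n → ℝ) → Matrix (Fin n) (Fin n) ℝ)
    (hT : ∀ (X : Matrix (Fin n) (Fin n) ℝ) (μ : Fin n → ℝ),
      T X μ = X * Matrix.diagonal lam * Rᵀ + R * Matrix.diagonal lam * Xᵀ
        + R * Matrix.diagonal μ * Rᵀ) :
    -- T : V × ℝⁿ → Sym_n is bijective iff λ₁, …, λₙ are pairwise distinct
    (((∀ (X₁ : Matrix (Fin n) (Fin n) ℝ) (μ₁ : Fin n → ℝ)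
         (X₂ : Matrix (Fin n) (Fin n) ℝ) (μ₂ : Fin n → ℝ),
         Rᵀ * X₁ + X₁ᵀ * R = 0 → Rᵀ * X₂ + X₂ᵀ * R = 0 →
         T X₁ μ₁ = T X₂ μ₂ → X₁ = X₂ ∧ μ₁ = μ₂) ∧
      (∀ S : Matrix (Fin n) (Fin n) ℝ, S.IsSymm →
         ∃ (X : Matrix (Fin n) (Fin n) ℝ) (μ : Fin n → ℝ),
           Rᵀ * X + Xᵀ * R = 0 ∧ T X μ = S))
      ↔ Function.Injective lam) ∧
    -- surjectivity of (R, λ) ↦ R diag(λ) Rᵀ onto the symmetric matrices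
    (∀ S : Matrix (Fin n) (Fin n) ℝ, S.IsSymm →
      ∃ (P : Matrix (Fin n) (Fin n) ℝ) (μ : Fin n → ℝ),
        Pᵀ * P = 1 ∧ P * Matrix.diagonal μ * Pᵀ = S) := by
  have hRR : R * Rᵀ = 1 := mul_eq_one_comm.mp hR
  -- key conjugation formula
  have key : ∀ (Y : Matrix (Fin n) (Fin n) ℝ) (μ : Fin n → ℝ),
      T (R * Y) μ = R * (Y * Matrix.diagonal lam + Matrix.diagonal lam * Yᵀ
        + Matrix.diagonal μ) * Rᵀ := by
    intro Y μ
    rw [hT]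
    simp only [Matrix.transpose_mul, Matrix.mul_add, Matrix.add_mul, Matrix.mul_assoc]
  have hXRY : ∀ X : Matrix (Fin n) (Fin n) ℝ, X = R * (Rᵀ * X) := by
    intro X; rw [← Matrix.mul_assoc, hRR, Matrix.one_mul]
  have conj_cancel : ∀ A B : Matrix (Fin n) (Fin n) ℝ,
      R * A * Rᵀ = R * B * Rᵀ → A = B := by
    have lem : ∀ M : Matrix (Fin n) (Fin n) ℝ, Rᵀ * (R * M * Rᵀ) * R = M := by
      intro M
      rw [show Rᵀ * (R * M * Rᵀ) * R = (Rᵀ * R) * M * (Rᵀ * R) by noncomm_ring, hR,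
        Matrix.one_mul, Matrix.mul_one]
    intro A B h
    rw [← lem A, h, lem]
  constructor
  · constructor
    · rintro ⟨hinj, -⟩ i j hij
      by_contra hne
      -- build skew Y with a nonzero entry at (i,j)
      set Y : Matrix (Fin n) (Fin n) ℝ :=
        Matrix.single i j 1 - Matrix.single j i 1 with hY
      have hYT : Yᵀ = -Y := by
        ext a b
        simp only [hY, Matrix.transpose_apply, Matrix.sub_apply, Matrix.neg_apply,
          Matrix.single, Matrix.of_apply]
        by_cases h1 : i = b ∧ j = a <;> by_cases h2 : j = b ∧ i = a <;>
          simp [h1, h2, and_comm] <;> tauto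
      have hcomm : Y * Matrix.diagonal lam = Matrix.diagonal lam * Y := by
        ext a b
        simp only [Matrix.mul_diagonal, Matrix.diagonal_mul, hY, Matrix.sub_apply,
          Matrix.single]
        by_cases h1 : i = a ∧ j = b
        · obtain ⟨rfl, rfl⟩ := h1; simp [hij, hne, Ne.symm hne]
        · by_cases h2 : j = a ∧ i = b
          · obtain ⟨rfl, rfl⟩ := h2; simp [hij, hne, Ne.symm hne]
          · simp [Matrix.of_apply, h1, h2]
      have hT0 : T (R * Y) 0 = T (R * 0) 0 := by
        rw [key, key, hYT]
        simp [hcomm]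
      have hV1 : Rᵀ * (R * Y) + (R * Y)ᵀ * R = 0 := by
        rw [Matrix.transpose_mul, ← Matrix.mul_assoc Rᵀ R Y, hR, Matrix.one_mul,
          Matrix.mul_assoc, hR, Matrix.mul_one, hYT]
        abel
      have hV2 : Rᵀ * (R * 0) + (R * (0:Matrix (Fin n) (Fin n) ℝ))ᵀ * R = 0 := by
        simp
      have := (hinj (R * Y) 0 (R * 0) 0 hV1 hV2 hT0).1
      have hY0 : Y = 0 := by
        have := congrArg (fun M => Rᵀ * M) this
        simpa [← Matrix.mul_assoc, hR] using this
      have : Y i j = 1 := by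
        simp [hY, Matrix.single, Matrix.of_apply, hne, Ne.symm hne]
      rw [hY0] at this
      simp at this
    · intro hlam
      constructor
      · intro X₁ μ₁ X₂ μ₂ hV1 hV2 heq
        set Y₁ := Rᵀ * X₁ with hY1
        set Y₂ := Rᵀ * X₂ with hY2
        have hY1T : Y₁ᵀ = -Y₁ := by
          have : Y₁ + Y₁ᵀ = 0 := by
            rw [hY1, Matrix.transpose_mul, Matrix.transpose_transpose]; exact hV1
          linear_combination (norm := abel) this
        have hY2T : Y₂ᵀ = -Y₂ := by
          have : Y₂ + Y₂ᵀ = 0 := by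
            rw [hY2, Matrix.transpose_mul, Matrix.transpose_transpose]; exact hV2
          linear_combination (norm := abel) this
        rw [hXRY X₁, hXRY X₂, ← hY1, ← hY2] at heq
        rw [key, key] at heq
        have hF := conj_cancel _ _ heq
        rw [hY1T, hY2T] at hF
        have hentry : ∀ a b, Y₁ a b * lam b - lam a * Y₁ a b
            + (if a = b then μ₁ a else 0)
            = Y₂ a b * lam b - lam a * Y₂ a b + (if a = b then μ₂ a else 0) := by
          intro a b
          have h := congrFun (congrFun hF a) b
          simp only [Matrix.add_apply, Matrix.mul_diagonal, Matrix.diagonal_mul,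
            Matrix.neg_apply, Matrix.diagonal_apply] at h
          by_cases hab : a = b <;> simp only [hab, if_pos, if_neg, if_true, if_false] at h ⊢ <;>
            linear_combination h
        have hYeq : Y₁ = Y₂ := by
          ext a b
          by_cases hab : a = b
          · subst hab
            have h1 : Y₁ a a = 0 := by
              have := congrFun (congrFun hY1T a) a
              simp only [Matrix.transpose_apply, Matrix.neg_apply] at this
              linarith
            have h2 : Y₂ a a = 0 := by
              have := congrFun (congrFun hY2T a) a
              simp only [Matrix.transpose_apply, Matrix.neg_apply] at this
              linarith
            rw [h1, h2]
          · have h := hentry a b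
            simp only [hab, if_false] at h
            have hll : lam b - lam a ≠ 0 := by
              intro hc
              exact hab (hlam (by linarith) ).symm
            have : Y₁ a b * (lam b - lam a) = Y₂ a b * (lam b - lam a) := by
              linear_combination h
            exact mul_right_cancel₀ hll this
        have hmu : μ₁ = μ₂ := by
          funext a
          have h := hentry a a
          simp only [if_true, eq_self_iff_true] at h
          linear_combination h
        refine ⟨?_, hmu⟩
        rw [hXRY X₁, hXRY X₂, ← hY1, ← hY2, hYeq]
      · intro S hS
        set S' := Rᵀ * S * R with hS'
        have hS'symm : ∀ a b, S' a b = S' b a := by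
          intro a b
          have : S'ᵀ = S' := by
            rw [hS', Matrix.transpose_mul, Matrix.transpose_mul,
              Matrix.transpose_transpose, hS.eq, Matrix.mul_assoc]
          simpa using congrFun (congrFun this b) a
        set Y : Matrix (Fin n) (Fin n) ℝ :=
          Matrix.of (fun a b => if a = b then 0 else S' a b / (lam b - lam a)) with hY
        set μ : Fin n → ℝ := fun a => S' a a with hμ
        have hYskew : Yᵀ = -Y := by
          ext a b
          simp only [Matrix.transpose_apply, Matrix.neg_apply, hY, Matrix.of_apply]
          by_cases hab : a = b
          · simp [hab]
          · have hba : ¬ b = a := fun h => hab h.symm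
            simp only [hab, hba, if_false]
            have hll : lam b - lam a ≠ 0 := fun hc => hab (hlam (by linarith)).symm
            have hll' : lam a - lam b ≠ 0 := fun hc => hab (hlam (by linarith))
            rw [hS'symm b a]
            field_simp
            ring
        refine ⟨R * Y, μ, ?_, ?_⟩
        · rw [Matrix.transpose_mul, ← Matrix.mul_assoc Rᵀ R Y, hR, Matrix.one_mul,
            Matrix.mul_assoc Yᵀ Rᵀ R, hR, Matrix.mul_one, hYskew]
          abel
        · rw [key]
          have hmid : Y * Matrix.diagonal lam + Matrix.diagonal lam * Yᵀ
              + Matrix.diagonal μ = S' := by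
            ext a b
            simp only [Matrix.add_apply, Matrix.mul_diagonal, Matrix.diagonal_mul,
              Matrix.diagonal_apply, hYskew, Matrix.neg_apply, hY, Matrix.of_apply, hμ]
            by_cases hab : a = b
            · subst hab; simp
            · have hll : lam b - lam a ≠ 0 := fun hc => hab (hlam (by linarith)).symm
              have hll' : lam a - lam b ≠ 0 := fun hc => hab (hlam (by linarith))
              simp only [hab, if_false, Matrix.transpose_apply, Matrix.of_apply, Ne.symm hab,
                hS'symm b a]
              field_simp
              ring
          rw [hmid, hS', ← Matrix.mul_assoc, ← Matrix.mul_assoc, hRR, Matrix.one_mul,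
            Matrix.mul_assoc, hRR, Matrix.mul_one]
  · intro S hS
    have hHerm : S.IsHermitian := by
      rwa [Matrix.IsHermitian, Matrix.conjTranspose_eq_transpose_of_trivial]
    refine ⟨hHerm.eigenvectorUnitary, hHerm.eigenvalues, ?_, ?_⟩
    · have h := (Matrix.mem_unitaryGroup_iff').mp hHerm.eigenvectorUnitary.2
      rw [Matrix.star_eq_conjTranspose, Matrix.conjTranspose_eq_transpose_of_trivial] at h
      exact h
    · have hst := hHerm.spectral_theorem
      rw [Unitary.conjStarAlgAut_apply, Matrix.star_eq_conjTranspose,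
        Matrix.conjTranspose_eq_transpose_of_trivial,
        show RCLike.ofReal ∘ hHerm.eigenvalues = hHerm.eigenvalues from by
          rw [RCLike.ofReal_real_eq_id]; rfl] at hst
      exact hst.symm

end
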